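/- For r = 2 and any n ≥ 6, the graph G_{n,2} is unmixed: every maximal independent set of G_{n,2} has the same cardinality, namely 3. -/

import Mathlib

/-- The graph `G_{n,r}`: vertices `x_1,…,x_n` in cyclic order (indexed by `ZMod n`),
where for `i < j` the vertices `x_i, x_j` are adjacent iff `r+1 ≤ j-i ≤ n-(r+1)`. -/
def Gnr (n r : ℕ) : SimpleGraph (ZMod n) :=
  SimpleGraph.fromRel (fun i j => r + 1 ≤ j.val - i.val ∧ j.val - i.val ≤ n - (r + 1))

/-- A set of vertices is independent if its elements are pairwise non-adjacent. -/
def IsIndepSet {V : Type*} (G : SimpleGraph V) (s : Set V) : Prop :=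
  s.Pairwise (fun a b => ¬ G.Adj a b)

/-- A maximal independent set. -/
def IsMaxIndepSet {V : Type*} (G : SimpleGraph V) (s : Set V) : Prop :=
  IsIndepSet G s ∧ ∀ t : Set V, IsIndepSet G t → s ⊆ t → t = s

lemma cast_eq_zero_false (n : ℕ) (hn : 6 ≤ n) (k : ℕ) (h1 : 0 < k) (h2 : k < 6)
    (h : ((k : ℕ) : ZMod n) = 0) : False := by
  have := (ZMod.natCast_eq_zero_iff k n).mp h
  have := Nat.le_of_dvd h1 this
  omega

lemma nonadj_aux (n : ℕ) (hn : 6 ≤ n) (i j : ZMod n) (hij : i.val < j.val) :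
    (¬ (Gnr n 2).Adj i j) ↔ (j - i = 1 ∨ j - i = 2 ∨ j - i = -1 ∨ j - i = -2) := by
  haveI : NeZero n := ⟨by omega⟩
  have ha : i.val < n := ZMod.val_lt i
  have hb : j.val < n := ZMod.val_lt j
  have hij' : i ≠ j := fun h => by rw [h] at hij; exact lt_irrefl _ hij
  have hadj : (Gnr n 2).Adj i j ↔ (3 ≤ j.val - i.val ∧ j.val - i.val ≤ n - 3) := by
    rw [Gnr, SimpleGraph.fromRel_adj]
    constructor
    · rintro ⟨-, h | h⟩ <;> exact ⟨by omega, by omega⟩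
    · intro h; exact ⟨hij', Or.inl ⟨by omega, by omega⟩⟩
  have hd : (j - i).val = j.val - i.val := ZMod.val_sub (le_of_lt hij)
  have key : ∀ k : ℕ, k < n → (j - i = (k : ZMod n) ↔ j.val - i.val = k) := by
    intro k hk
    constructor
    · intro h
      have := congrArg ZMod.val h
      rwa [hd, ZMod.val_cast_of_lt hk] at this
    · intro h
      have : (j - i).val = ((k : ZMod n)).val := by rw [hd, ZMod.val_cast_of_lt hk, h]
      exact ZMod.val_injective n this
  have hm1 : (-1 : ZMod n) = ((n - 1 : ℕ) : ZMod n) := by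
    rw [Nat.cast_sub (by omega : 1 ≤ n), ZMod.natCast_self, zero_sub, Nat.cast_one]
  have hm2 : (-2 : ZMod n) = ((n - 2 : ℕ) : ZMod n) := by
    rw [Nat.cast_sub (by omega : 2 ≤ n), ZMod.natCast_self, zero_sub, Nat.cast_ofNat]
  rw [hadj, hm1, hm2]
  rw [show (1 : ZMod n) = ((1:ℕ) : ZMod n) by norm_num,
      show (2 : ZMod n) = ((2:ℕ) : ZMod n) by norm_num]
  rw [key 1 (by omega), key 2 (by omega), key (n-1) (by omega), key (n-2) (by omega)]
  omega

lemma nonadj (n : ℕ) (hn : 6 ≤ n) (i j : ZMod n) (hij : i ≠ j) :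
    (¬ (Gnr n 2).Adj i j) ↔ (j - i = 1 ∨ j - i = 2 ∨ j - i = -1 ∨ j - i = -2) := by
  haveI : NeZero n := ⟨by omega⟩
  rcases lt_trichotomy i.val j.val with h | h | h
  · exact nonadj_aux n hn i j h
  · exact absurd (ZMod.val_injective n h) hij
  · have := nonadj_aux n hn j i h
    rw [SimpleGraph.adj_comm] at this
    rw [this]
    constructor
    · rintro (h | h | h | h)
      · exact Or.inr (Or.inr (Or.inl (by linear_combination -h)))
      · exact Or.inr (Or.inr (Or.inr (by linear_combination -h)))
      · exact Or.inl (by linear_combination -h)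
      · exact Or.inr (Or.inl (by linear_combination -h))
    · rintro (h | h | h | h)
      · exact Or.inr (Or.inr (Or.inl (by linear_combination -h)))
      · exact Or.inr (Or.inr (Or.inr (by linear_combination -h)))
      · exact Or.inl (by linear_combination -h)
      · exact Or.inr (Or.inl (by linear_combination -h))

lemma ediff_ne (n : ℕ) (hn : 6 ≤ n) {x y : ZMod n}
    (h : x - y = 1 ∨ x - y = 2 ∨ x - y = -1 ∨ x - y = -2) : x ≠ y := by
  intro he
  subst he
  rcases h with h | h | h | h
  · exact cast_eq_zero_false n hn 1 (by norm_num) (by norm_num) (by push_cast; linear_combination -h)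
  · exact cast_eq_zero_false n hn 2 (by norm_num) (by norm_num) (by push_cast; linear_combination -h)
  · exact cast_eq_zero_false n hn 1 (by norm_num) (by norm_num) (by push_cast; linear_combination h)
  · exact cast_eq_zero_false n hn 2 (by norm_num) (by norm_num) (by push_cast; linear_combination h)

lemma no3 (n : ℕ) (hn : 6 ≤ n) {x y : ZMod n} (h : x - y = 3 ∨ x - y = -3)
    (hE : x - y = 1 ∨ x - y = 2 ∨ x - y = -1 ∨ x - y = -2) : False := by
  rcases h with h | h <;> rcases hE with h' | h' | h' | h' <;>
    first
    | exact cast_eq_zero_false n hn 1 (by norm_num) (by norm_num)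
        (by push_cast; linear_combination h - h')
    | exact cast_eq_zero_false n hn 2 (by norm_num) (by norm_num)
        (by push_cast; linear_combination h - h')
    | exact cast_eq_zero_false n hn 4 (by norm_num) (by norm_num)
        (by push_cast; linear_combination h - h')
    | exact cast_eq_zero_false n hn 5 (by norm_num) (by norm_num)
        (by push_cast; linear_combination h - h')
    | exact cast_eq_zero_false n hn 1 (by norm_num) (by norm_num)
        (by push_cast; linear_combination h' - h)
    | exact cast_eq_zero_false n hn 2 (by norm_num) (by norm_num)
        (by push_cast; linear_combination h' - h)
    | exact cast_eq_zero_false n hn 4 (by norm_num) (by norm_num)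
        (by push_cast; linear_combination h' - h)
    | exact cast_eq_zero_false n hn 5 (by norm_num) (by norm_num)
        (by push_cast; linear_combination h' - h)

lemma nonadj_symm (n : ℕ) : Symmetric (fun a b => ¬ (Gnr n 2).Adj a b) :=
  fun _ _ h hadj => h hadj.symm

lemma mem_ext (n : ℕ) {s : Set (ZMod n)} (hs : IsMaxIndepSet (Gnr n 2) s) (c : ZMod n)
    (h : ∀ x ∈ s, ¬ (Gnr n 2).Adj c x) : c ∈ s := by
  have t_ind : IsIndepSet (Gnr n 2) (insert c s) := by
    haveI : Std.Symm (fun a b => ¬ (Gnr n 2).Adj a b) := ⟨fun a b h => nonadj_symm n h⟩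
    rw [IsIndepSet, Set.pairwise_insert_of_symm]
    exact ⟨hs.1, fun x hx _ => h x hx⟩
  have := hs.2 _ t_ind (Set.subset_insert c s)
  rw [← this]
  exact Set.mem_insert c s

lemma ub (n : ℕ) (hn : 6 ≤ n) {s : Set (ZMod n)} (hind : IsIndepSet (Gnr n 2) s) :
    s.ncard ≤ 3 := by
  haveI : NeZero n := ⟨by omega⟩
  by_contra hc
  push_neg at hc
  have hfin : s.Finite := Set.toFinite s
  obtain ⟨a, ha⟩ := Set.nonempty_of_ncard_ne_zero (by omega : s.ncard ≠ 0)
  have e2 : (s \ {a}).ncard = s.ncard - 1 := Set.ncard_diff_singleton_of_mem ha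
  obtain ⟨b, hb⟩ := Set.nonempty_of_ncard_ne_zero (by omega : (s \ {a}).ncard ≠ 0)
  have e3 : ((s \ {a}) \ {b}).ncard = (s \ {a}).ncard - 1 :=
    Set.ncard_diff_singleton_of_mem hb
  obtain ⟨c, hcm⟩ := Set.nonempty_of_ncard_ne_zero (by omega : ((s \ {a}) \ {b}).ncard ≠ 0)
  have e4 : (((s \ {a}) \ {b}) \ {c}).ncard = ((s \ {a}) \ {b}).ncard - 1 :=
    Set.ncard_diff_singleton_of_mem hcm
  obtain ⟨d, hdm⟩ :=
    Set.nonempty_of_ncard_ne_zero (by omega : (((s \ {a}) \ {b}) \ {c}).ncard ≠ 0)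
  simp only [Set.mem_diff, Set.mem_singleton_iff] at hb hcm hdm
  obtain ⟨⟨⟨hd, hda'⟩, hdb'⟩, hdc'⟩ := hdm
  obtain ⟨⟨hcs, hca'⟩, hcb'⟩ := hcm
  obtain ⟨hbs, hba'⟩ := hb
  have hab : a ≠ b := fun h => hba' h.symm
  have hac : a ≠ c := fun h => hca' h.symm
  have had : a ≠ d := fun h => hda' h.symm
  have hbc : b ≠ c := fun h => hcb' h.symm
  have hbd : b ≠ d := fun h => hdb' h.symm
  have hcd : c ≠ d := fun h => hdc' h.symm
  have h1 := (nonadj n hn a b hab).mp (hind ha hbs hab)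
  have h2 := (nonadj n hn a c hac).mp (hind ha hcs hac)
  have h3 := (nonadj n hn a d had).mp (hind ha hd had)
  have hcb := (nonadj n hn b c hbc).mp (hind hbs hcs hbc)
  have hdb := (nonadj n hn b d hbd).mp (hind hbs hd hbd)
  have hdc := (nonadj n hn c d hcd).mp (hind hcs hd hcd)
  rcases h1 with h1 | h1 | h1 | h1 <;> rcases h2 with h2 | h2 | h2 | h2 <;>
    rcases h3 with h3 | h3 | h3 | h3 <;>
    first
    | exact hbc (by linear_combination h1 - h2)
    | exact hbd (by linear_combination h1 - h3)
    | exact hcd (by linear_combination h2 - h3)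
    | exact no3 n hn (Or.inl (by linear_combination h2 - h1)) hcb
    | exact no3 n hn (Or.inr (by linear_combination h2 - h1)) hcb
    | exact no3 n hn (Or.inl (by linear_combination h3 - h1)) hdb
    | exact no3 n hn (Or.inr (by linear_combination h3 - h1)) hdb
    | exact no3 n hn (Or.inl (by linear_combination h3 - h2)) hdc
    | exact no3 n hn (Or.inr (by linear_combination h3 - h2)) hdc

lemma ext2 (n : ℕ) (hn : 6 ≤ n) {a b c : ZMod n} (hs : IsMaxIndepSet (Gnr n 2) {a, b})
    (hca : c - a = 1 ∨ c - a = 2 ∨ c - a = -1 ∨ c - a = -2)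
    (hcb : c - b = 1 ∨ c - b = 2 ∨ c - b = -1 ∨ c - b = -2) : False := by
  have hc : c ∈ ({a, b} : Set (ZMod n)) := by
    apply mem_ext n hs c
    intro x hx
    rcases hx with rfl | hx
    · exact fun hadj => ((nonadj n hn x c (ediff_ne n hn hca).symm).mpr hca) hadj.symm
    · rw [Set.mem_singleton_iff] at hx
      subst hx
      exact fun hadj => ((nonadj n hn x c (ediff_ne n hn hcb).symm).mpr hcb) hadj.symm
  rcases hc with hc | hc
  · exact (ediff_ne n hn hca) hc
  · rw [Set.mem_singleton_iff] at hc
    exact (ediff_ne n hn hcb) hc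

/-- For `r = 2` and `n ≥ 6` the graph `G_{n,2}` is unmixed:
every maximal independent set has cardinality `3`. -/
theorem stmt4 (n : ℕ) (hn : 6 ≤ n) (s : Set (ZMod n)) (hs : IsMaxIndepSet (Gnr n 2) s) :
    s.ncard = 3 := by
  haveI : NeZero n := ⟨by omega⟩
  have hfin : s.Finite := Set.toFinite s
  have hub := ub n hn hs.1
  have hcases : s.ncard = 0 ∨ s.ncard = 1 ∨ s.ncard = 2 ∨ s.ncard = 3 := by omega
  rcases hcases with h | h | h | h
  · -- empty
    exfalso
    have hse : s = ∅ := (Set.ncard_eq_zero hfin).mp h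
    have h0 : (0 : ZMod n) ∈ s := by
      apply mem_ext n hs 0
      intro x hx
      rw [hse] at hx
      exact absurd hx (Set.notMem_empty x)
    rw [hse] at h0
    exact Set.notMem_empty _ h0
  · -- singleton
    exfalso
    obtain ⟨a, rfl⟩ := Set.ncard_eq_one.mp h
    have hne : a + 1 ≠ a := ediff_ne n hn (Or.inl (by ring))
    have key : a + 1 ∈ ({a} : Set (ZMod n)) := by
      apply mem_ext n hs (a + 1)
      intro x hx
      rw [Set.mem_singleton_iff] at hx
      subst hx
      exact (nonadj n hn (x + 1) x hne).mpr (Or.inr (Or.inr (Or.inl (by ring))))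
    exact hne (Set.mem_singleton_iff.mp key)
  · -- pair
    exfalso
    obtain ⟨a, b, hab, rfl⟩ := Set.ncard_eq_two.mp h
    have hmem_a : a ∈ ({a, b} : Set (ZMod n)) := Set.mem_insert a _
    have hmem_b : b ∈ ({a, b} : Set (ZMod n)) := Set.mem_insert_iff.mpr (Or.inr rfl)
    have hE := (nonadj n hn a b hab).mp (hs.1 hmem_a hmem_b hab)
    rcases hE with hE | hE | hE | hE
    · exact ext2 n hn (c := a + 2) hs (Or.inr (Or.inl (by ring)))
        (Or.inl (by linear_combination -hE))
    · exact ext2 n hn (c := a + 1) hs (Or.inl (by ring))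
        (Or.inr (Or.inr (Or.inl (by linear_combination -hE))))
    · exact ext2 n hn (c := a - 2) hs (Or.inr (Or.inr (Or.inr (by ring))))
        (Or.inr (Or.inr (Or.inl (by linear_combination -hE))))
    · exact ext2 n hn (c := a - 1) hs (Or.inr (Or.inr (Or.inl (by ring))))
        (Or.inl (by linear_combination -hE))
  · exact h
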